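/- Given a right principal G-bundle P from H to G and a right principal L-bundle P' from G to L, the quotient P ×_G P' := (P ×_{G⁰} P')/((p,p') ∼ (p·γ, γ⁻¹·p')) is a right principal L-bundle from H to L; composition of generalized morphisms defined this way is associative up to isomorphism of principal bundles. -/

import Mathlib

/-- A groupoid `G ⇉ G0` given by source/target maps, a partially defined
(associative) product, a unit map and an inverse map, as in the paper. -/
structure Gpd (G : Type*) (G0 : Type*) where
  s : G → G0
  r : G → G0
  mul : (γ : G) → (η : G) → s γ = r η → G
  u : G0 → G
  inv : G → G
  s_u : ∀ x, s (u x) = x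
  r_u : ∀ x, r (u x) = x
  r_mul : ∀ γ η h, r (mul γ η h) = r γ
  s_mul : ∀ γ η h, s (mul γ η h) = s η
  mul_assoc : ∀ γ η δ (h₁ : s γ = r η) (h₂ : s η = r δ),
    mul γ (mul η δ h₂) (h₁.trans (r_mul η δ h₂).symm) =
      mul (mul γ η h₁) δ ((s_mul γ η h₁).trans h₂)
  mul_u : ∀ γ, mul γ (u (s γ)) (r_u (s γ)).symm = γ
  u_mul : ∀ γ, mul (u (r γ)) γ (s_u (r γ)) = γ
  inv_comp₁ : ∀ γ, s γ = r (inv γ)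
  inv_comp₂ : ∀ γ, s (inv γ) = r γ
  mul_inv : ∀ γ, mul γ (inv γ) (inv_comp₁ γ) = u (r γ)
  inv_mul : ∀ γ, mul (inv γ) γ (inv_comp₂ γ) = u (s γ)

/-- A right groupoid action on a set along an anchor map. -/
structure RightGpdAction {G G0 : Type*} (Γ : Gpd G G0) (X : Type*) where
  ε : X → G0
  act : (x : X) → (γ : G) → ε x = Γ.r γ → X
  ε_act : ∀ x γ h, ε (act x γ h) = Γ.s γ
  act_u : ∀ x, act x (Γ.u (ε x)) (Γ.r_u (ε x)).symm = x
  act_mul : ∀ x γ₁ γ₂ (h : ε x = Γ.r γ₁) (h' : Γ.s γ₁ = Γ.r γ₂),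
    act (act x γ₁ h) γ₂ ((ε_act x γ₁ h).trans h') =
      act x (Γ.mul γ₁ γ₂ h') (h.trans (Γ.r_mul γ₁ γ₂ h').symm)

/-- A left groupoid action on a set along an anchor map. -/
structure LeftGpdAction {G G0 : Type*} (Γ : Gpd G G0) (X : Type*) where
  ρ : X → G0
  act : (γ : G) → (x : X) → Γ.s γ = ρ x → X
  ρ_act : ∀ γ x h, ρ (act γ x h) = Γ.r γ
  act_u : ∀ x, act (Γ.u (ρ x)) x (Γ.s_u (ρ x)) = x
  act_mul : ∀ γ₁ γ₂ x (h : Γ.s γ₂ = ρ x) (h' : Γ.s γ₁ = Γ.r γ₂),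
    act γ₁ (act γ₂ x h) (h'.trans (ρ_act γ₂ x h).symm) =
      act (Γ.mul γ₁ γ₂ h') x ((Γ.s_mul γ₁ γ₂ h').trans h)

/-- A bibundle from `ΓH` to `ΓG` : a set `P` with a left `ΓH`-action and a right
`ΓG`-action which commute and preserve each other's anchor maps. -/
structure Bibundle {H H0 G G0 : Type*} (ΓH : Gpd H H0) (ΓG : Gpd G G0)
    (P : Type*) where
  L : LeftGpdAction ΓH P
  R : RightGpdAction ΓG P
  ε_Lact : ∀ γ p h, R.ε (L.act γ p h) = R.ε p
  ρ_Ract : ∀ p γ h, L.ρ (R.act p γ h) = L.ρ p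
  commute : ∀ γ p η (h₁ : ΓH.s γ = L.ρ p) (h₂ : R.ε p = ΓG.r η),
    L.act γ (R.act p η h₂) (h₁.trans (ρ_Ract p η h₂).symm) =
      R.act (L.act γ p h₁) η ((ε_Lact γ p h₁).trans h₂)

/-- Right principality of a bibundle: the projection `π = L.ρ` is surjective and
`(p,γ) ↦ (p, p·γ)` is a bijection from `P ×_{ε,r} G` onto `P ×_π P`. -/
def Bibundle.IsPrincipal {H H0 G G0 : Type*} {ΓH : Gpd H H0} {ΓG : Gpd G G0}
    {P : Type*} (B : Bibundle ΓH ΓG P) : Prop :=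
  Function.Surjective B.L.ρ ∧
    Function.Bijective (fun z : {z : P × G // B.R.ε z.1 = ΓG.r z.2} =>
      (⟨(z.1.1, B.R.act z.1.1 z.1.2 z.2),
        (B.ρ_Ract z.1.1 z.1.2 z.2).symm⟩ :
          {w : P × P // B.L.ρ w.1 = B.L.ρ w.2}))

/-- The fibered product `P ×_{G⁰} P'` of two composable bibundles. -/
def FP {H H0 G G0 L L0 : Type*} {ΓH : Gpd H H0} {ΓG : Gpd G G0} {ΓL : Gpd L L0}
    {P P' : Type*} (B : Bibundle ΓH ΓG P) (B' : Bibundle ΓG ΓL P') : Type _ :=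
  {x : P × P' // B.R.ε x.1 = B'.L.ρ x.2}

/-- The relation `(p,p') ∼ (p·γ, γ⁻¹·p')` on the fibered product. -/
def BibCompRel {H H0 G G0 L L0 : Type*} {ΓH : Gpd H H0} {ΓG : Gpd G G0}
    {ΓL : Gpd L L0} {P P' : Type*} (B : Bibundle ΓH ΓG P)
    (B' : Bibundle ΓG ΓL P') : FP B B' → FP B B' → Prop :=
  fun a b => ∃ (γ : G) (h : B.R.ε a.1.1 = ΓG.r γ),
    b.1.1 = B.R.act a.1.1 γ h ∧
      b.1.2 = B'.L.act (ΓG.inv γ) a.1.2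
        ((ΓG.inv_comp₂ γ).trans (h.symm.trans a.2))

/-- The carrier `P ×_G P'` of the composition of two generalized morphisms. -/
def CompCarrier {H H0 G G0 L L0 : Type*} {ΓH : Gpd H H0} {ΓG : Gpd G G0}
    {ΓL : Gpd L L0} {P P' : Type*} (B : Bibundle ΓH ΓG P)
    (B' : Bibundle ΓG ΓL P') : Type _ :=
  Quot (BibCompRel B B')

/-- Compatibility of a bibundle structure on `P ×_G P'` with the canonical
anchors and the canonical right and left actions on representatives. -/
def CompCompatible {H H0 G G0 L L0 : Type*} {ΓH : Gpd H H0} {ΓG : Gpd G G0}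
    {ΓL : Gpd L L0} {P P' : Type*} (B : Bibundle ΓH ΓG P)
    (B' : Bibundle ΓG ΓL P') (S : Bibundle ΓH ΓL (CompCarrier B B')) : Prop :=
  (∀ a : FP B B', S.L.ρ (Quot.mk _ a) = B.L.ρ a.1.1) ∧
  (∀ a : FP B B', S.R.ε (Quot.mk _ a) = B'.R.ε a.1.2) ∧
  (∀ (a : FP B B') (γ : L) (h : S.R.ε (Quot.mk _ a) = ΓL.r γ)
      (h' : B'.R.ε a.1.2 = ΓL.r γ),
    S.R.act (Quot.mk _ a) γ h =
      Quot.mk _ (⟨(a.1.1, B'.R.act a.1.2 γ h'),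
        a.2.trans (B'.ρ_Ract a.1.2 γ h').symm⟩ : FP B B')) ∧
  (∀ (a : FP B B') (γ : H) (h : ΓH.s γ = S.L.ρ (Quot.mk _ a))
      (h' : ΓH.s γ = B.L.ρ a.1.1),
    S.L.act γ (Quot.mk _ a) h =
      Quot.mk _ (⟨(B.L.act γ a.1.1 h', a.1.2),
        (B.ε_Lact γ a.1.1 h').trans a.2⟩ : FP B B'))

section GpdLemmas

variable {G G0 : Type*} (Γ : Gpd G G0)

theorem Gpd.mul_congr {γ γ' η η' : G} (hγ : γ = γ') (hη : η = η')
    (h : Γ.s γ = Γ.r η) (h' : Γ.s γ' = Γ.r η') :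
    Γ.mul γ η h = Γ.mul γ' η' h' := by subst hγ; subst hη; rfl

theorem Gpd.inv_u (x : G0) : Γ.inv (Γ.u x) = Γ.u x := by
  have h2 : Γ.r (Γ.inv (Γ.u x)) = x := (Γ.inv_comp₁ (Γ.u x)).symm.trans (Γ.s_u x)
  calc Γ.inv (Γ.u x)
      = Γ.mul (Γ.u (Γ.r (Γ.inv (Γ.u x)))) (Γ.inv (Γ.u x)) (Γ.s_u _) :=
        (Γ.u_mul (Γ.inv (Γ.u x))).symm
    _ = Γ.mul (Γ.u x) (Γ.inv (Γ.u x)) (Γ.inv_comp₁ _) :=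
        Γ.mul_congr (congrArg Γ.u h2) rfl _ _
    _ = Γ.u (Γ.r (Γ.u x)) := Γ.mul_inv _
    _ = Γ.u x := congrArg Γ.u (Γ.r_u x)

theorem Gpd.inv_unique {γ η : G} (h : Γ.s γ = Γ.r η)
    (hm : Γ.mul γ η h = Γ.u (Γ.r γ)) : η = Γ.inv γ := by
  have e1 : Γ.u (Γ.r η) = Γ.mul (Γ.inv γ) γ (Γ.inv_comp₂ γ) := by
    rw [Γ.inv_mul]; exact congrArg Γ.u h.symm
  calc η = Γ.mul (Γ.u (Γ.r η)) η (Γ.s_u _) := (Γ.u_mul η).symm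
    _ = Γ.mul (Γ.mul (Γ.inv γ) γ (Γ.inv_comp₂ γ)) η
          ((Γ.s_mul _ _ _).trans h) := Γ.mul_congr e1 rfl _ _
    _ = Γ.mul (Γ.inv γ) (Γ.mul γ η h)
          ((Γ.inv_comp₂ γ).trans (Γ.r_mul γ η h).symm) :=
        (Γ.mul_assoc (Γ.inv γ) γ η (Γ.inv_comp₂ γ) h).symm
    _ = Γ.mul (Γ.inv γ) (Γ.u (Γ.s (Γ.inv γ))) (Γ.r_u _).symm :=
        Γ.mul_congr rfl (hm.trans (congrArg Γ.u (Γ.inv_comp₂ γ).symm)) _ _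
    _ = Γ.inv γ := Γ.mul_u _

theorem Gpd.inv_inv (γ : G) : Γ.inv (Γ.inv γ) = γ := by
  refine (Γ.inv_unique (Γ.inv_comp₂ γ) ?_).symm
  rw [Γ.inv_mul]; exact congrArg Γ.u (Γ.inv_comp₁ γ)

theorem Gpd.inv_mul_rev {γ η : G} (h : Γ.s γ = Γ.r η) :
    Γ.inv (Γ.mul γ η h) = Γ.mul (Γ.inv η) (Γ.inv γ)
      ((Γ.inv_comp₂ η).trans (h.symm.trans (Γ.inv_comp₁ γ))) := by
  have hm : Γ.s (Γ.inv η) = Γ.r (Γ.inv γ) :=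
    (Γ.inv_comp₂ η).trans (h.symm.trans (Γ.inv_comp₁ γ))
  have h' : Γ.s (Γ.mul γ η h) = Γ.r (Γ.mul (Γ.inv η) (Γ.inv γ) hm) :=
    (Γ.s_mul γ η h).trans ((Γ.inv_comp₁ η).trans (Γ.r_mul _ _ _).symm)
  have hη : Γ.s η = Γ.r (Γ.mul (Γ.inv η) (Γ.inv γ) hm) :=
    (Γ.inv_comp₁ η).trans (Γ.r_mul _ _ _).symm
  have e1 : Γ.mul η (Γ.mul (Γ.inv η) (Γ.inv γ) hm) hη = Γ.inv γ :=
    calc Γ.mul η (Γ.mul (Γ.inv η) (Γ.inv γ) hm) hη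
        = Γ.mul (Γ.mul η (Γ.inv η) (Γ.inv_comp₁ η)) (Γ.inv γ)
            ((Γ.s_mul _ _ _).trans hm) :=
          Γ.mul_assoc η (Γ.inv η) (Γ.inv γ) (Γ.inv_comp₁ η) hm
      _ = Γ.mul (Γ.u (Γ.r (Γ.inv γ))) (Γ.inv γ) (Γ.s_u _) :=
          Γ.mul_congr ((Γ.mul_inv η).trans
            (congrArg Γ.u (h.symm.trans (Γ.inv_comp₁ γ)))) rfl _ _
      _ = Γ.inv γ := Γ.u_mul _
  refine (Γ.inv_unique h' ?_).symm
  calc Γ.mul (Γ.mul γ η h) (Γ.mul (Γ.inv η) (Γ.inv γ) hm) h'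
      = Γ.mul γ (Γ.mul η (Γ.mul (Γ.inv η) (Γ.inv γ) hm) hη)
          (h.trans (Γ.r_mul _ _ _).symm) := (Γ.mul_assoc γ η _ h hη).symm
    _ = Γ.mul γ (Γ.inv γ) (Γ.inv_comp₁ γ) := Γ.mul_congr rfl e1 _ _
    _ = Γ.u (Γ.r γ) := Γ.mul_inv γ
    _ = Γ.u (Γ.r (Γ.mul γ η h)) := congrArg Γ.u (Γ.r_mul γ η h).symm

end GpdLemmas
section ActLemmas

variable {G G0 : Type*} {Γ : Gpd G G0} {X : Type*}

theorem RightGpdAction.act_congr (A : RightGpdAction Γ X) {x y : X} {γ δ : G}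
    (hx : x = y) (hγ : γ = δ) (h : A.ε x = Γ.r γ) (h' : A.ε y = Γ.r δ) :
    A.act x γ h = A.act y δ h' := by subst hx; subst hγ; rfl

theorem LeftGpdAction.act_congr (A : LeftGpdAction Γ X) {γ δ : G} {x y : X}
    (hγ : γ = δ) (hx : x = y) (h : Γ.s γ = A.ρ x) (h' : Γ.s δ = A.ρ y) :
    A.act γ x h = A.act δ y h' := by subst hγ; subst hx; rfl

theorem RightGpdAction.act_act_inv (A : RightGpdAction Γ X) (x : X) (γ : G)
    (h : A.ε x = Γ.r γ) :
    A.act (A.act x γ h) (Γ.inv γ) ((A.ε_act x γ h).trans (Γ.inv_comp₁ γ)) = x :=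
  calc A.act (A.act x γ h) (Γ.inv γ) ((A.ε_act x γ h).trans (Γ.inv_comp₁ γ))
      = A.act x (Γ.mul γ (Γ.inv γ) (Γ.inv_comp₁ γ))
          (h.trans (Γ.r_mul _ _ _).symm) := A.act_mul x γ (Γ.inv γ) h _
    _ = A.act x (Γ.u (A.ε x)) (Γ.r_u _).symm :=
        A.act_congr rfl ((Γ.mul_inv γ).trans (congrArg Γ.u h.symm)) _ _
    _ = x := A.act_u x

theorem RightGpdAction.act_inv_act (A : RightGpdAction Γ X) (x : X) (γ : G)
    (h : A.ε x = Γ.r (Γ.inv γ)) :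
    A.act (A.act x (Γ.inv γ) h) γ
      ((A.ε_act x (Γ.inv γ) h).trans (Γ.inv_comp₂ γ)) = x :=
  calc A.act (A.act x (Γ.inv γ) h) γ ((A.ε_act x (Γ.inv γ) h).trans (Γ.inv_comp₂ γ))
      = A.act x (Γ.mul (Γ.inv γ) γ (Γ.inv_comp₂ γ))
          (h.trans (Γ.r_mul _ _ _).symm) := A.act_mul x (Γ.inv γ) γ h _
    _ = A.act x (Γ.u (A.ε x)) (Γ.r_u _).symm :=
        A.act_congr rfl ((Γ.inv_mul γ).trans
          (congrArg Γ.u ((Γ.inv_comp₁ γ).trans h.symm))) _ _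
    _ = x := A.act_u x

theorem LeftGpdAction.act_inv_act (A : LeftGpdAction Γ X) (γ : G) (x : X)
    (h : Γ.s γ = A.ρ x) :
    A.act (Γ.inv γ) (A.act γ x h)
      ((Γ.inv_comp₂ γ).trans (A.ρ_act γ x h).symm) = x :=
  calc A.act (Γ.inv γ) (A.act γ x h) ((Γ.inv_comp₂ γ).trans (A.ρ_act γ x h).symm)
      = A.act (Γ.mul (Γ.inv γ) γ (Γ.inv_comp₂ γ)) x
          ((Γ.s_mul _ _ _).trans h) := A.act_mul (Γ.inv γ) γ x h _
    _ = A.act (Γ.u (A.ρ x)) x (Γ.s_u _) :=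
        A.act_congr ((Γ.inv_mul γ).trans (congrArg Γ.u h)) rfl _ _
    _ = x := A.act_u x

theorem LeftGpdAction.act_act_inv (A : LeftGpdAction Γ X) (γ : G) (x : X)
    (h : Γ.s (Γ.inv γ) = A.ρ x) :
    A.act γ (A.act (Γ.inv γ) x h)
      ((Γ.inv_comp₁ γ).trans (A.ρ_act (Γ.inv γ) x h).symm) = x :=
  calc A.act γ (A.act (Γ.inv γ) x h)
        ((Γ.inv_comp₁ γ).trans (A.ρ_act (Γ.inv γ) x h).symm)
      = A.act (Γ.mul γ (Γ.inv γ) (Γ.inv_comp₁ γ)) x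
          ((Γ.s_mul _ _ _).trans h) := A.act_mul γ (Γ.inv γ) x h _
    _ = A.act (Γ.u (A.ρ x)) x (Γ.s_u _) :=
        A.act_congr ((Γ.mul_inv γ).trans
          (congrArg Γ.u ((Γ.inv_comp₂ γ).symm.trans h))) rfl _ _
    _ = x := A.act_u x

end ActLemmas
section CompRelLemmas

variable {H H0 G G0 L L0 : Type*} {ΓH : Gpd H H0} {ΓG : Gpd G G0}
  {ΓL : Gpd L L0} {P P' : Type*} (B : Bibundle ΓH ΓG P) (B' : Bibundle ΓG ΓL P')

theorem compRel_refl (a : FP B B') : BibCompRel B B' a a := by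
  refine ⟨ΓG.u (B.R.ε a.1.1), (ΓG.r_u _).symm, (B.R.act_u a.1.1).symm, ?_⟩
  refine (?_ : B'.L.act _ _ _ = _).symm
  calc B'.L.act (ΓG.inv (ΓG.u (B.R.ε a.1.1))) a.1.2
        ((ΓG.inv_comp₂ _).trans (((ΓG.r_u _).symm).symm.trans a.2))
      = B'.L.act (ΓG.u (B'.L.ρ a.1.2)) a.1.2 (ΓG.s_u _) :=
        B'.L.act_congr ((ΓG.inv_u _).trans (congrArg ΓG.u a.2)) rfl _ _
    _ = a.1.2 := B'.L.act_u a.1.2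

theorem compRel_symm {a b : FP B B'} (hab : BibCompRel B B' a b) :
    BibCompRel B B' b a := by
  obtain ⟨γ, h, e1, e2⟩ := hab
  have h2 : B.R.ε b.1.1 = ΓG.r (ΓG.inv γ) :=
    (congrArg B.R.ε e1).trans ((B.R.ε_act _ _ _).trans (ΓG.inv_comp₁ γ))
  refine ⟨ΓG.inv γ, h2, ?_, ?_⟩
  · calc a.1.1 = B.R.act (B.R.act a.1.1 γ h) (ΓG.inv γ)
          ((B.R.ε_act a.1.1 γ h).trans (ΓG.inv_comp₁ γ)) :=
        (B.R.act_act_inv a.1.1 γ h).symm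
      _ = B.R.act b.1.1 (ΓG.inv γ) h2 := B.R.act_congr e1.symm rfl _ _
  · have hρ : ΓG.s (ΓG.inv γ) = B'.L.ρ a.1.2 :=
      (ΓG.inv_comp₂ γ).trans (h.symm.trans a.2)
    calc a.1.2 = B'.L.act γ (B'.L.act (ΓG.inv γ) a.1.2 hρ)
          ((ΓG.inv_comp₁ γ).trans (B'.L.ρ_act _ _ _).symm) :=
        (B'.L.act_act_inv γ a.1.2 hρ).symm
      _ = B'.L.act (ΓG.inv (ΓG.inv γ)) b.1.2
          ((ΓG.inv_comp₂ _).trans (h2.symm.trans b.2)) :=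
        B'.L.act_congr (ΓG.inv_inv γ).symm e2.symm _ _

theorem compRel_trans {a b c : FP B B'} (hab : BibCompRel B B' a b)
    (hbc : BibCompRel B B' b c) : BibCompRel B B' a c := by
  obtain ⟨γ, h, e1, e2⟩ := hab
  obtain ⟨δ, h', f1, f2⟩ := hbc
  have hb : B.R.ε b.1.1 = ΓG.s γ := (congrArg B.R.ε e1).trans (B.R.ε_act _ _ _)
  have hc : ΓG.s γ = ΓG.r δ := hb.symm.trans h'
  have hr : B.R.ε a.1.1 = ΓG.r (ΓG.mul γ δ hc) := h.trans (ΓG.r_mul _ _ _).symm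
  refine ⟨ΓG.mul γ δ hc, hr, ?_, ?_⟩
  · calc c.1.1 = B.R.act b.1.1 δ h' := f1
      _ = B.R.act (B.R.act a.1.1 γ h) δ ((B.R.ε_act _ _ _).trans hc) :=
        B.R.act_congr e1 rfl _ _
      _ = B.R.act a.1.1 (ΓG.mul γ δ hc) hr := B.R.act_mul a.1.1 γ δ h hc
  · have hρa : ΓG.s (ΓG.inv γ) = B'.L.ρ a.1.2 :=
      (ΓG.inv_comp₂ γ).trans (h.symm.trans a.2)
    calc c.1.2 = B'.L.act (ΓG.inv δ) b.1.2
          ((ΓG.inv_comp₂ δ).trans (h'.symm.trans b.2)) := f2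
      _ = B'.L.act (ΓG.inv δ) (B'.L.act (ΓG.inv γ) a.1.2 hρa)
          ((ΓG.inv_comp₂ δ).trans ((hc.symm.trans (ΓG.inv_comp₁ γ)).trans
            (B'.L.ρ_act _ _ _).symm)) :=
        B'.L.act_congr rfl e2 _ _
      _ = B'.L.act (ΓG.mul (ΓG.inv δ) (ΓG.inv γ)
            ((ΓG.inv_comp₂ δ).trans (hc.symm.trans (ΓG.inv_comp₁ γ)))) a.1.2
          ((ΓG.s_mul _ _ _).trans hρa) :=
        B'.L.act_mul (ΓG.inv δ) (ΓG.inv γ) a.1.2 hρa _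
      _ = B'.L.act (ΓG.inv (ΓG.mul γ δ hc)) a.1.2
          ((ΓG.inv_comp₂ _).trans (hr.symm.trans a.2)) :=
        B'.L.act_congr (ΓG.inv_mul_rev hc).symm rfl _ _

theorem compRel_equivalence : Equivalence (BibCompRel B B') :=
  ⟨compRel_refl B B', compRel_symm B B', compRel_trans B B'⟩

theorem compRel_of_eq {a b : FP B B'}
    (h : (Quot.mk (BibCompRel B B') a : CompCarrier B B') = Quot.mk _ b) :
    BibCompRel B B' a b :=
  (Equivalence.eqvGen_iff (compRel_equivalence B B')).mp (Quot.eq.mp h)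

theorem compRel_ρ {a b : FP B B'} (hab : BibCompRel B B' a b) :
    B.L.ρ a.1.1 = B.L.ρ b.1.1 := by
  obtain ⟨γ, h, e1, _⟩ := hab
  rw [e1, B.ρ_Ract]

theorem compRel_ε {a b : FP B B'} (hab : BibCompRel B B' a b) :
    B'.R.ε a.1.2 = B'.R.ε b.1.2 := by
  obtain ⟨γ, h, _, e2⟩ := hab
  rw [e2, B'.ε_Lact]

/-- A chosen representative of a point of the quotient. -/
noncomputable def crep (q : CompCarrier B B') : FP B B' :=
  (Quot.exists_rep q).choose

theorem crep_spec (q : CompCarrier B B') :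
    (Quot.mk (BibCompRel B B') (crep B B' q) : CompCarrier B B') = q :=
  (Quot.exists_rep q).choose_spec

theorem crep_rel {a : FP B B'} :
    BibCompRel B B' (crep B B' (Quot.mk _ a)) a :=
  compRel_of_eq B B' (crep_spec B B' (Quot.mk _ a))

end CompRelLemmas
section CompConstruction

variable {H H0 G G0 L L0 : Type*} {ΓH : Gpd H H0} {ΓG : Gpd G G0}
  {ΓL : Gpd L L0} {P P' : Type*} (B : Bibundle ΓH ΓG P) (B' : Bibundle ΓG ΓL P')

/-- Left action of `H` on representatives. -/
def fpLeftAct (γ : H) (a : FP B B') (h : ΓH.s γ = B.L.ρ a.1.1) : FP B B' :=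
  ⟨(B.L.act γ a.1.1 h, a.1.2), (B.ε_Lact γ a.1.1 h).trans a.2⟩

/-- Right action of `L` on representatives. -/
def fpRightAct (a : FP B B') (γ : L) (h : B'.R.ε a.1.2 = ΓL.r γ) : FP B B' :=
  ⟨(a.1.1, B'.R.act a.1.2 γ h), a.2.trans (B'.ρ_Ract a.1.2 γ h).symm⟩

theorem fpLeftAct_rel {a b : FP B B'} (γ : H) (hab : BibCompRel B B' a b)
    (h : ΓH.s γ = B.L.ρ a.1.1) (h' : ΓH.s γ = B.L.ρ b.1.1) :
    BibCompRel B B' (fpLeftAct B B' γ a h) (fpLeftAct B B' γ b h') := by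
  obtain ⟨δ, hδ, e1, e2⟩ := hab
  have hε : B.R.ε (fpLeftAct B B' γ a h).1.1 = ΓG.r δ :=
    (B.ε_Lact γ a.1.1 h).trans hδ
  refine ⟨δ, hε, ?_, ?_⟩
  · calc (fpLeftAct B B' γ b h').1.1 = B.L.act γ b.1.1 h' := rfl
      _ = B.L.act γ (B.R.act a.1.1 δ hδ) (h.trans (B.ρ_Ract a.1.1 δ hδ).symm) :=
        B.L.act_congr rfl e1 _ _
      _ = B.R.act (B.L.act γ a.1.1 h) δ ((B.ε_Lact γ a.1.1 h).trans hδ) :=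
        B.commute γ a.1.1 δ h hδ
  · exact e2.trans (B'.L.act_congr rfl rfl _ _)

theorem fpRightAct_rel {a b : FP B B'} (γ : L) (hab : BibCompRel B B' a b)
    (h : B'.R.ε a.1.2 = ΓL.r γ) (h' : B'.R.ε b.1.2 = ΓL.r γ) :
    BibCompRel B B' (fpRightAct B B' a γ h) (fpRightAct B B' b γ h') := by
  obtain ⟨δ, hδ, e1, e2⟩ := hab
  have hρδ : ΓG.s (ΓG.inv δ) = B'.L.ρ a.1.2 :=
    (ΓG.inv_comp₂ δ).trans (hδ.symm.trans a.2)
  refine ⟨δ, hδ, e1, ?_⟩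
  calc (fpRightAct B B' b γ h').1.2 = B'.R.act b.1.2 γ h' := rfl
    _ = B'.R.act (B'.L.act (ΓG.inv δ) a.1.2 hρδ) γ
        ((B'.ε_Lact _ _ _).trans h) := B'.R.act_congr e2 rfl _ _
    _ = B'.L.act (ΓG.inv δ) (B'.R.act a.1.2 γ h)
        (hρδ.trans (B'.ρ_Ract a.1.2 γ h).symm) := (B'.commute _ _ _ _ _).symm

/-- The anchor of the left action on the quotient. -/
def Qρ : CompCarrier B B' → H0 :=
  Quot.lift (fun a => B.L.ρ a.1.1) (fun _ _ hab => compRel_ρ B B' hab)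

/-- The anchor of the right action on the quotient. -/
def Qε : CompCarrier B B' → L0 :=
  Quot.lift (fun a => B'.R.ε a.1.2) (fun _ _ hab => compRel_ε B B' hab)

/-- The left `H`-action on the quotient. -/
noncomputable def QLact (γ : H) (q : CompCarrier B B') (h : ΓH.s γ = Qρ B B' q) :
    CompCarrier B B' :=
  Quot.mk _ (fpLeftAct B B' γ (crep B B' q)
    (h.trans (congrArg (Qρ B B') (crep_spec B B' q).symm)))

/-- The right `L`-action on the quotient. -/
noncomputable def QRact (q : CompCarrier B B') (γ : L) (h : Qε B B' q = ΓL.r γ) :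
    CompCarrier B B' :=
  Quot.mk _ (fpRightAct B B' (crep B B' q) γ
    ((congrArg (Qε B B') (crep_spec B B' q)).trans h))

theorem QLact_mk (γ : H) (a : FP B B') (h : ΓH.s γ = Qρ B B' (Quot.mk _ a))
    (h' : ΓH.s γ = B.L.ρ a.1.1) :
    QLact B B' γ (Quot.mk _ a) h = Quot.mk _ (fpLeftAct B B' γ a h') :=
  Quot.sound (fpLeftAct_rel B B' γ (crep_rel B B') _ _)

theorem QRact_mk (a : FP B B') (γ : L) (h : Qε B B' (Quot.mk _ a) = ΓL.r γ)
    (h' : B'.R.ε a.1.2 = ΓL.r γ) :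
    QRact B B' (Quot.mk _ a) γ h = Quot.mk _ (fpRightAct B B' a γ h') :=
  Quot.sound (fpRightAct_rel B B' γ (crep_rel B B') _ _)

end CompConstruction
section CompBibundle

variable {H H0 G G0 L L0 : Type*} {ΓH : Gpd H H0} {ΓG : Gpd G G0}
  {ΓL : Gpd L L0} {P P' : Type*} (B : Bibundle ΓH ΓG P) (B' : Bibundle ΓG ΓL P')

theorem QLact_congr {γ γ' : H} {q q' : CompCarrier B B'} (hγ : γ = γ')
    (hq : q = q') (h : ΓH.s γ = Qρ B B' q) (h' : ΓH.s γ' = Qρ B B' q') :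
    QLact B B' γ q h = QLact B B' γ' q' h' := by subst hγ; subst hq; rfl

theorem QRact_congr {γ γ' : L} {q q' : CompCarrier B B'} (hq : q = q')
    (hγ : γ = γ') (h : Qε B B' q = ΓL.r γ) (h' : Qε B B' q' = ΓL.r γ') :
    QRact B B' q γ h = QRact B B' q' γ' h' := by subst hγ; subst hq; rfl

theorem fpLeftAct_comp (γ₁ γ₂ : H) (a : FP B B') (h : ΓH.s γ₂ = B.L.ρ a.1.1)
    (hm : ΓH.s γ₁ = ΓH.r γ₂)
    (h' : ΓH.s γ₁ = B.L.ρ (fpLeftAct B B' γ₂ a h).1.1)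
    (hm' : ΓH.s (ΓH.mul γ₁ γ₂ hm) = B.L.ρ a.1.1) :
    fpLeftAct B B' γ₁ (fpLeftAct B B' γ₂ a h) h' =
      fpLeftAct B B' (ΓH.mul γ₁ γ₂ hm) a hm' :=
  Subtype.ext (Prod.ext_iff.mpr ⟨B.L.act_mul γ₁ γ₂ a.1.1 h hm, rfl⟩)

theorem fpRightAct_comp (a : FP B B') (γ₁ γ₂ : L) (h : B'.R.ε a.1.2 = ΓL.r γ₁)
    (hm : ΓL.s γ₁ = ΓL.r γ₂)
    (h' : B'.R.ε (fpRightAct B B' a γ₁ h).1.2 = ΓL.r γ₂)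
    (hm' : B'.R.ε a.1.2 = ΓL.r (ΓL.mul γ₁ γ₂ hm)) :
    fpRightAct B B' (fpRightAct B B' a γ₁ h) γ₂ h' =
      fpRightAct B B' a (ΓL.mul γ₁ γ₂ hm) hm' :=
  Subtype.ext (Prod.ext_iff.mpr ⟨rfl, B'.R.act_mul a.1.2 γ₁ γ₂ h hm⟩)

theorem Qρ_Lact (γ : H) (q : CompCarrier B B') (h : ΓH.s γ = Qρ B B' q) :
    Qρ B B' (QLact B B' γ q h) = ΓH.r γ := by
  induction q using Quot.ind with | _ a =>
  rw [QLact_mk B B' γ a h h]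
  exact B.L.ρ_act γ a.1.1 _

theorem Qε_Ract (q : CompCarrier B B') (γ : L) (h : Qε B B' q = ΓL.r γ) :
    Qε B B' (QRact B B' q γ h) = ΓL.s γ := by
  induction q using Quot.ind with | _ a =>
  rw [QRact_mk B B' a γ h h]
  exact B'.R.ε_act a.1.2 γ _

theorem Qε_Lact (γ : H) (q : CompCarrier B B') (h : ΓH.s γ = Qρ B B' q) :
    Qε B B' (QLact B B' γ q h) = Qε B B' q := by
  induction q using Quot.ind with | _ a =>
  rw [QLact_mk B B' γ a h h]
  exact rfl

theorem Qρ_Ract (q : CompCarrier B B') (γ : L) (h : Qε B B' q = ΓL.r γ) :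
    Qρ B B' (QRact B B' q γ h) = Qρ B B' q := by
  induction q using Quot.ind with | _ a =>
  rw [QRact_mk B B' a γ h h]
  exact rfl

theorem QLact_u (q : CompCarrier B B') (h : ΓH.s (ΓH.u (Qρ B B' q)) = Qρ B B' q) :
    QLact B B' (ΓH.u (Qρ B B' q)) q h = q := by
  induction q using Quot.ind with | _ a =>
  rw [QLact_mk B B' (ΓH.u (Qρ B B' (Quot.mk _ a))) a h (ΓH.s_u _)]
  exact congrArg (Quot.mk _)
    (Subtype.ext (Prod.ext_iff.mpr ⟨B.L.act_u a.1.1, rfl⟩))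

theorem QRact_u (q : CompCarrier B B') (h : Qε B B' q = ΓL.r (ΓL.u (Qε B B' q))) :
    QRact B B' q (ΓL.u (Qε B B' q)) h = q := by
  induction q using Quot.ind with | _ a =>
  rw [QRact_mk B B' a (ΓL.u (Qε B B' (Quot.mk _ a))) h (ΓL.r_u _).symm]
  exact congrArg (Quot.mk _)
    (Subtype.ext (Prod.ext_iff.mpr ⟨rfl, B'.R.act_u a.1.2⟩))

theorem QLact_mul (γ₁ γ₂ : H) (q : CompCarrier B B') (h : ΓH.s γ₂ = Qρ B B' q)
    (h' : ΓH.s γ₁ = ΓH.r γ₂) (hL : ΓH.s γ₁ = Qρ B B' (QLact B B' γ₂ q h))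
    (hR : ΓH.s (ΓH.mul γ₁ γ₂ h') = Qρ B B' q) :
    QLact B B' γ₁ (QLact B B' γ₂ q h) hL =
      QLact B B' (ΓH.mul γ₁ γ₂ h') q hR := by
  induction q using Quot.ind with | _ a =>
  have h2 : ΓH.s γ₂ = B.L.ρ a.1.1 := h
  calc QLact B B' γ₁ (QLact B B' γ₂ (Quot.mk _ a) h) hL
      = QLact B B' γ₁ (Quot.mk _ (fpLeftAct B B' γ₂ a h2))
          (hL.trans (congrArg (Qρ B B') (QLact_mk B B' γ₂ a h h2))) :=
        QLact_congr B B' rfl (QLact_mk B B' γ₂ a h h2) _ _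
    _ = (show CompCarrier B B' from Quot.mk _ (fpLeftAct B B' γ₁ (fpLeftAct B B' γ₂ a h2)
          (h'.trans (B.L.ρ_act γ₂ a.1.1 h2).symm))) :=
        QLact_mk B B' γ₁ _ _ _
    _ = (show CompCarrier B B' from Quot.mk _ (fpLeftAct B B' (ΓH.mul γ₁ γ₂ h') a
          ((ΓH.s_mul _ _ _).trans h2))) :=
        congrArg (Quot.mk _) (fpLeftAct_comp B B' γ₁ γ₂ a h2 h' _ _)
    _ = QLact B B' (ΓH.mul γ₁ γ₂ h') (Quot.mk _ a) hR :=
        (QLact_mk B B' _ a hR _).symm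

theorem QRact_mul (q : CompCarrier B B') (γ₁ γ₂ : L) (h : Qε B B' q = ΓL.r γ₁)
    (h' : ΓL.s γ₁ = ΓL.r γ₂) (hL : Qε B B' (QRact B B' q γ₁ h) = ΓL.r γ₂)
    (hR : Qε B B' q = ΓL.r (ΓL.mul γ₁ γ₂ h')) :
    QRact B B' (QRact B B' q γ₁ h) γ₂ hL =
      QRact B B' q (ΓL.mul γ₁ γ₂ h') hR := by
  induction q using Quot.ind with | _ a =>
  have h2 : B'.R.ε a.1.2 = ΓL.r γ₁ := h
  calc QRact B B' (QRact B B' (Quot.mk _ a) γ₁ h) γ₂ hL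
      = QRact B B' (Quot.mk _ (fpRightAct B B' a γ₁ h2)) γ₂
          ((congrArg (Qε B B') (QRact_mk B B' a γ₁ h h2)).symm.trans hL) :=
        QRact_congr B B' (QRact_mk B B' a γ₁ h h2) rfl _ _
    _ = (show CompCarrier B B' from Quot.mk _ (fpRightAct B B' (fpRightAct B B' a γ₁ h2) γ₂
          ((B'.R.ε_act a.1.2 γ₁ h2).trans h'))) :=
        QRact_mk B B' _ γ₂ _ _
    _ = (show CompCarrier B B' from Quot.mk _ (fpRightAct B B' a (ΓL.mul γ₁ γ₂ h')
          (h2.trans (ΓL.r_mul _ _ _).symm))) :=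
        congrArg (Quot.mk _) (fpRightAct_comp B B' a γ₁ γ₂ h2 h' _ _)
    _ = QRact B B' (Quot.mk _ a) (ΓL.mul γ₁ γ₂ h') hR :=
        (QRact_mk B B' a _ hR _).symm

theorem Qcommute (γ : H) (q : CompCarrier B B') (η : L)
    (h₂ : Qε B B' q = ΓL.r η) (hA : ΓH.s γ = Qρ B B' (QRact B B' q η h₂))
    (hγ : ΓH.s γ = Qρ B B' q) (hB : Qε B B' (QLact B B' γ q hγ) = ΓL.r η) :
    QLact B B' γ (QRact B B' q η h₂) hA =
      QRact B B' (QLact B B' γ q hγ) η hB := by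
  induction q using Quot.ind with | _ a =>
  have h2 : B'.R.ε a.1.2 = ΓL.r η := h₂
  have hg : ΓH.s γ = B.L.ρ a.1.1 := hγ
  calc QLact B B' γ (QRact B B' (Quot.mk _ a) η h₂) hA
      = QLact B B' γ (Quot.mk _ (fpRightAct B B' a η h2))
          (hA.trans (congrArg (Qρ B B') (QRact_mk B B' a η h₂ h2))) :=
        QLact_congr B B' rfl (QRact_mk B B' a η h₂ h2) _ _
    _ = (show CompCarrier B B' from Quot.mk _ (fpLeftAct B B' γ (fpRightAct B B' a η h2) hg)) :=
        QLact_mk B B' γ _ _ _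
    _ = (show CompCarrier B B' from Quot.mk _ (fpRightAct B B' (fpLeftAct B B' γ a hg) η h2)) := rfl
    _ = QRact B B' (Quot.mk _ (fpLeftAct B B' γ a hg)) η
          ((congrArg (Qε B B') (QLact_mk B B' γ a hγ hg)).symm.trans
            ((Qε_Lact B B' γ (Quot.mk _ a) hγ).trans h₂)) :=
        (QRact_mk B B' _ η _ _).symm
    _ = QRact B B' (QLact B B' γ (Quot.mk _ a) hγ) η hB :=
        QRact_congr B B' (QLact_mk B B' γ a hγ hg).symm rfl _ _

/-- The composite bibundle structure on the quotient `P ×_G P'`. -/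
noncomputable def compS : Bibundle ΓH ΓL (CompCarrier B B') where
  L :=
    { ρ := Qρ B B'
      act := QLact B B'
      ρ_act := Qρ_Lact B B'
      act_u := fun q => QLact_u B B' q _
      act_mul := fun γ₁ γ₂ q h h' => QLact_mul B B' γ₁ γ₂ q h h' _ _ }
  R :=
    { ε := Qε B B'
      act := QRact B B'
      ε_act := Qε_Ract B B'
      act_u := fun q => QRact_u B B' q _
      act_mul := fun q γ₁ γ₂ h h' => QRact_mul B B' q γ₁ γ₂ h h' _ _ }
  ε_Lact := Qε_Lact B B'
  ρ_Ract := Qρ_Ract B B'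
  commute := fun γ q η h₁ h₂ => Qcommute B B' γ q η h₂
    (h₁.trans (Qρ_Ract B B' q η h₂).symm) h₁
    ((Qε_Lact B B' γ q h₁).trans h₂)

end CompBibundle
section CompPrincipal

variable {H H0 G G0 L L0 : Type*} {ΓH : Gpd H H0} {ΓG : Gpd G G0}
  {ΓL : Gpd L L0} {P P' : Type*} (B : Bibundle ΓH ΓG P) (B' : Bibundle ΓG ΓL P')

theorem compS_compatible : CompCompatible B B' (compS B B') :=
  ⟨fun _ => rfl, fun _ => rfl,
    fun a γ h h' => QRact_mk B B' a γ h h',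
    fun a γ h h' => QLact_mk B B' γ a h h'⟩

theorem compS_principal (hB : B.IsPrincipal) (hB' : B'.IsPrincipal) :
    (compS B B').IsPrincipal := by
  constructor
  · intro x
    obtain ⟨p, hp⟩ := hB.1 x
    obtain ⟨p', hp'⟩ := hB'.1 (B.R.ε p)
    exact ⟨Quot.mk _ ⟨(p, p'), hp'.symm⟩, hp⟩
  constructor
  · -- injectivity
    rintro ⟨⟨q1, l1⟩, hz1⟩ ⟨⟨q2, l2⟩, hz2⟩ heq
    have e0 : q1 = q2 := congrArg (fun w => w.1.1) heq
    have e1 : QRact B B' q1 l1 hz1 = QRact B B' q2 l2 hz2 :=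
      congrArg (fun w => w.1.2) heq
    subst e0
    set a := crep B B' q1 with ha
    have hsp : (Quot.mk _ a : CompCarrier B B') = q1 := crep_spec B B' q1
    have h1 : B'.R.ε a.1.2 = ΓL.r l1 :=
      (congrArg (Qε B B') hsp).trans hz1
    have h2 : B'.R.ε a.1.2 = ΓL.r l2 :=
      (congrArg (Qε B B') hsp).trans hz2
    have e1' : (Quot.mk _ (fpRightAct B B' a l1 h1) : CompCarrier B B') =
        Quot.mk _ (fpRightAct B B' a l2 h2) := by
      calc (show CompCarrier B B' from Quot.mk _ (fpRightAct B B' a l1 h1))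
          = QRact B B' (Quot.mk _ a) l1 ((congrArg (Qε B B') hsp).trans hz1) :=
            (QRact_mk B B' a l1 _ h1).symm
        _ = QRact B B' q1 l1 hz1 := QRact_congr B B' hsp rfl _ _
        _ = QRact B B' q1 l2 hz2 := e1
        _ = QRact B B' (Quot.mk _ a) l2 ((congrArg (Qε B B') hsp).trans hz2) :=
            QRact_congr B B' hsp.symm rfl _ _
        _ = (show CompCarrier B B' from Quot.mk _ (fpRightAct B B' a l2 h2)) := QRact_mk B B' a l2 _ h2
    obtain ⟨δ, hδ, g1, g2⟩ := compRel_of_eq B B' e1'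
    have hδ' : B.R.ε a.1.1 = ΓG.r δ := hδ
    have g1' : a.1.1 = B.R.act a.1.1 δ hδ' := g1
    -- δ is the unit
    have hu : δ = ΓG.u (B.R.ε a.1.1) := by
      have := hB.2.1 (a₁ := ⟨(a.1.1, δ), hδ'⟩)
        (a₂ := ⟨(a.1.1, ΓG.u (B.R.ε a.1.1)), (ΓG.r_u _).symm⟩)
        (Subtype.ext (Prod.ext_iff.mpr ⟨rfl, g1'.symm.trans (B.R.act_u a.1.1).symm⟩))
      exact congrArg (fun w => w.1.2) this
    have hρ1 : ΓG.s (ΓG.inv δ) = B'.L.ρ (B'.R.act a.1.2 l1 h1) :=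
      (ΓG.inv_comp₂ δ).trans (hδ'.symm.trans (a.2.trans (B'.ρ_Ract a.1.2 l1 h1).symm))
    have g2' : B'.R.act a.1.2 l2 h2 = B'.L.act (ΓG.inv δ) (B'.R.act a.1.2 l1 h1) hρ1 := g2
    have gfix : B'.R.act a.1.2 l2 h2 = B'.R.act a.1.2 l1 h1 := by
      calc B'.R.act a.1.2 l2 h2
          = B'.L.act (ΓG.inv δ) (B'.R.act a.1.2 l1 h1) hρ1 := g2'
        _ = B'.L.act (ΓG.u (B'.L.ρ (B'.R.act a.1.2 l1 h1)))
            (B'.R.act a.1.2 l1 h1) (ΓG.s_u _) := by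
            refine B'.L.act_congr ?_ rfl _ _
            rw [hu, ΓG.inv_u]
            exact congrArg ΓG.u (a.2.trans (B'.ρ_Ract a.1.2 l1 h1).symm)
        _ = B'.R.act a.1.2 l1 h1 := B'.L.act_u _
    have hleq : l1 = l2 := by
      have := hB'.2.1 (a₁ := ⟨(a.1.2, l1), h1⟩) (a₂ := ⟨(a.1.2, l2), h2⟩)
        (Subtype.ext (Prod.ext_iff.mpr ⟨rfl, gfix.symm⟩))
      exact congrArg (fun w => w.1.2) this
    exact Subtype.ext (Prod.ext_iff.mpr ⟨rfl, hleq⟩)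
  · -- surjectivity
    rintro ⟨⟨q1, q2⟩, hw⟩
    set a := crep B B' q1 with ha
    set b := crep B B' q2 with hb
    have hsa : (Quot.mk _ a : CompCarrier B B') = q1 := crep_spec B B' q1
    have hsb : (Quot.mk _ b : CompCarrier B B') = q2 := crep_spec B B' q2
    have hw' : B.L.ρ a.1.1 = B.L.ρ b.1.1 :=
      (congrArg (Qρ B B') hsa).trans (hw.trans (congrArg (Qρ B B') hsb).symm)
    obtain ⟨z, hz⟩ := hB.2.2 ⟨(a.1.1, b.1.1), hw'⟩
    have e1 : z.1.1 = a.1.1 := congrArg (fun w => w.1.1) hz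
    have e2 : B.R.act z.1.1 z.1.2 z.2 = b.1.1 := congrArg (fun w => w.1.2) hz
    set γ := z.1.2 with hγdef
    have hγ2 : B.R.ε a.1.1 = ΓG.r γ := (congrArg B.R.ε e1).symm.trans z.2
    have eb : B.R.act a.1.1 γ hγ2 = b.1.1 :=
      (B.R.act_congr e1 rfl z.2 hγ2).symm.trans e2
    have hsγ : ΓG.s γ = B'.L.ρ b.1.2 :=
      (B.R.ε_act a.1.1 γ hγ2).symm.trans ((congrArg B.R.ε eb).trans b.2)
    set x : FP B B' := ⟨(a.1.1, B'.L.act γ b.1.2 hsγ),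
      hγ2.trans (B'.L.ρ_act γ b.1.2 hsγ).symm⟩ with hxdef
    have hrelxb : BibCompRel B B' x b := by
      refine ⟨γ, hγ2, eb.symm, ?_⟩
      exact (B'.L.act_inv_act γ b.1.2 hsγ).symm.trans (B'.L.act_congr rfl rfl _ _)
    have hq2 : (Quot.mk _ x : CompCarrier B B') = q2 :=
      (Quot.sound hrelxb).trans hsb
    have hρρ : B'.L.ρ a.1.2 = B'.L.ρ x.1.2 :=
      a.2.symm.trans (hγ2.trans (B'.L.ρ_act γ b.1.2 hsγ).symm)
    obtain ⟨zz, hzz⟩ := hB'.2.2 ⟨(a.1.2, x.1.2), hρρ⟩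
    have f1 : zz.1.1 = a.1.2 := congrArg (fun w => w.1.1) hzz
    have f2 : B'.R.act zz.1.1 zz.1.2 zz.2 = x.1.2 := congrArg (fun w => w.1.2) hzz
    have hl : B'.R.ε a.1.2 = ΓL.r zz.1.2 := (congrArg B'.R.ε f1).symm.trans zz.2
    have fx : B'.R.act a.1.2 zz.1.2 hl = x.1.2 :=
      (B'.R.act_congr f1 rfl zz.2 hl).symm.trans f2
    have hQ : Qε B B' q1 = ΓL.r zz.1.2 :=
      (congrArg (Qε B B') hsa).symm.trans hl
    refine ⟨⟨(q1, zz.1.2), hQ⟩, Subtype.ext (Prod.ext_iff.mpr ⟨rfl, ?_⟩)⟩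
    show QRact B B' q1 zz.1.2 hQ = q2
    calc QRact B B' q1 zz.1.2 hQ
        = QRact B B' (Quot.mk _ a) zz.1.2 ((congrArg (Qε B B') hsa).trans hQ) :=
          QRact_congr B B' hsa.symm rfl _ _
      _ = (show CompCarrier B B' from Quot.mk _ (fpRightAct B B' a zz.1.2 hl)) := QRact_mk B B' a zz.1.2 _ hl
      _ = (show CompCarrier B B' from Quot.mk _ x) := congrArg (Quot.mk _) (Subtype.ext (Prod.ext_iff.mpr ⟨rfl, fx⟩))
      _ = q2 := hq2

end CompPrincipal
section Assoc

variable {H H0 G G0 L L0 K K0 : Type*} {ΓH : Gpd H H0} {ΓG : Gpd G G0}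
  {ΓL : Gpd L L0} {ΓK : Gpd K K0} {P P' P'' : Type*}
  {B : Bibundle ΓH ΓG P} {B' : Bibundle ΓG ΓL P'} {B'' : Bibundle ΓL ΓK P''}
  {S12 : Bibundle ΓH ΓL (CompCarrier B B')}
  {S23 : Bibundle ΓG ΓK (CompCarrier B' B'')}

def fwdAux (c23 : CompCompatible B' B'' S23) (a : FP B B') (p'' : P'')
    (h : B'.R.ε a.1.2 = B''.L.ρ p'') : CompCarrier B S23 :=
  Quot.mk _ ⟨(a.1.1, Quot.mk _ (⟨(a.1.2, p''), h⟩ : FP B' B'')),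
    a.2.trans (c23.1 ⟨(a.1.2, p''), h⟩).symm⟩

theorem fwdAux_rel (c23 : CompCompatible B' B'' S23) {a b : FP B B'}
    (hab : BibCompRel B B' a b) (p'' : P'') (ha : B'.R.ε a.1.2 = B''.L.ρ p'')
    (hb : B'.R.ε b.1.2 = B''.L.ρ p'') :
    fwdAux c23 a p'' ha = fwdAux c23 b p'' hb := by
  obtain ⟨γ, hγ, e1, e2⟩ := hab
  apply Quot.sound
  refine ⟨γ, hγ, e1, ?_⟩
  have hs : ΓG.s (ΓG.inv γ) = B'.L.ρ a.1.2 :=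
    (ΓG.inv_comp₂ γ).trans (hγ.symm.trans a.2)
  have key := c23.2.2.2 ⟨(a.1.2, p''), ha⟩ (ΓG.inv γ)
    (hs.trans (c23.1 ⟨(a.1.2, p''), ha⟩).symm) hs
  have hbp : B'.R.ε (B'.L.act (ΓG.inv γ) a.1.2 hs) = B''.L.ρ p'' :=
    (B'.ε_Lact (ΓG.inv γ) a.1.2 hs).trans ha
  have hstep : (Quot.mk (BibCompRel B' B'') ⟨(b.1.2, p''), hb⟩ :
      CompCarrier B' B'') =
      Quot.mk _ ⟨(B'.L.act (ΓG.inv γ) a.1.2 hs, p''), hbp⟩ :=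
    congrArg (Quot.mk _) (Subtype.ext (Prod.ext_iff.mpr ⟨e2, rfl⟩))
  exact hstep.trans key.symm

noncomputable def fwd (c12 : CompCompatible B B' S12)
    (c23 : CompCompatible B' B'' S23) (x : FP S12 B'') : CompCarrier B S23 :=
  fwdAux c23 (crep B B' x.1.1) x.1.2
    ((c12.2.1 (crep B B' x.1.1)).symm.trans
      ((congrArg S12.R.ε (crep_spec B B' x.1.1)).trans x.2))

theorem fwd_mk (c12 : CompCompatible B B' S12) (c23 : CompCompatible B' B'' S23)
    (a : FP B B') (p'' : P'') (h : S12.R.ε (Quot.mk _ a) = B''.L.ρ p'')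
    (h' : B'.R.ε a.1.2 = B''.L.ρ p'') :
    fwd c12 c23 ⟨(Quot.mk _ a, p''), h⟩ = fwdAux c23 a p'' h' :=
  fwdAux_rel c23 (crep_rel B B') p'' _ _

theorem fwd_sound (c12 : CompCompatible B B' S12)
    (c23 : CompCompatible B' B'' S23) (x y : FP S12 B'')
    (hxy : BibCompRel S12 B'' x y) : fwd c12 c23 x = fwd c12 c23 y := by
  obtain ⟨l, hl, e1, e2⟩ := hxy
  have ha : (Quot.mk _ (crep B B' x.1.1) : CompCarrier B B') = x.1.1 :=
    crep_spec B B' x.1.1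
  set a := crep B B' x.1.1 with hadef
  have hεa : B'.R.ε a.1.2 = ΓL.r l :=
    (c12.2.1 a).symm.trans ((congrArg S12.R.ε ha).trans hl)
  have hA : B'.R.ε a.1.2 = B''.L.ρ x.1.2 :=
    (c12.2.1 a).symm.trans ((congrArg S12.R.ε ha).trans x.2)
  have hB : B'.R.ε (B'.R.act a.1.2 l hεa) = B''.L.ρ y.1.2 :=
    (B'.R.ε_act a.1.2 l hεa).trans ((ΓL.inv_comp₁ l).trans
      ((B''.L.ρ_act (ΓL.inv l) x.1.2
        ((ΓL.inv_comp₂ l).trans (hl.symm.trans x.2))).symm.trans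
        (congrArg B''.L.ρ e2).symm))
  have inner : (Quot.mk (BibCompRel B' B'') ⟨(a.1.2, x.1.2), hA⟩ :
      CompCarrier B' B'') = Quot.mk _ ⟨(B'.R.act a.1.2 l hεa, y.1.2), hB⟩ :=
    Quot.sound ⟨l, hεa, rfl, e2⟩
  have main : fwdAux c23 a x.1.2 hA =
      fwdAux c23 (fpRightAct B B' a l hεa) y.1.2 hB :=
    congrArg (Quot.mk _) (Subtype.ext (Prod.ext_iff.mpr ⟨rfl, inner⟩))
  have hey : y.1.1 = Quot.mk _ (fpRightAct B B' a l hεa) := by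
    refine e1.trans ?_
    refine (S12.R.act_congr (x := x.1.1) (y := Quot.mk _ a) ha.symm rfl hl
      ((congrArg S12.R.ε ha).trans hl)).trans ?_
    exact c12.2.2.1 a l _ hεa
  have relY : BibCompRel B B' (fpRightAct B B' a l hεa) (crep B B' y.1.1) :=
    compRel_of_eq B B' (hey.symm.trans (crep_spec B B' y.1.1).symm)
  exact main.trans (fwdAux_rel c23 relY y.1.2 _ _)

def bwdAux (c12 : CompCompatible B B' S12) (p : P) (b : FP B' B'')
    (h : B.R.ε p = B'.L.ρ b.1.1) : CompCarrier S12 B'' :=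
  Quot.mk _ ⟨(Quot.mk _ (⟨(p, b.1.1), h⟩ : FP B B'), b.1.2),
    (c12.2.1 ⟨(p, b.1.1), h⟩).trans b.2⟩

theorem bwdAux_rel (c12 : CompCompatible B B' S12) {b b' : FP B' B''}
    (hbb : BibCompRel B' B'' b b') (p : P) (hb : B.R.ε p = B'.L.ρ b.1.1)
    (hb' : B.R.ε p = B'.L.ρ b'.1.1) :
    bwdAux c12 p b hb = bwdAux c12 p b' hb' := by
  obtain ⟨l, hl, e1, e2⟩ := hbb
  apply Quot.sound
  have hε : S12.R.ε (Quot.mk _ (⟨(p, b.1.1), hb⟩ : FP B B')) = ΓL.r l :=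
    (c12.2.1 _).trans hl
  refine ⟨l, hε, ?_, e2⟩
  refine Eq.symm ((c12.2.2.1 ⟨(p, b.1.1), hb⟩ l hε hl).trans ?_)
  exact congrArg (Quot.mk _) (Subtype.ext (Prod.ext_iff.mpr ⟨rfl, e1.symm⟩))

noncomputable def bwd (c12 : CompCompatible B B' S12)
    (c23 : CompCompatible B' B'' S23) (x : FP B S23) : CompCarrier S12 B'' :=
  bwdAux c12 x.1.1 (crep B' B'' x.1.2)
    (x.2.trans ((congrArg S23.L.ρ (crep_spec B' B'' x.1.2).symm).trans
      (c23.1 (crep B' B'' x.1.2))))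

theorem bwd_mk (c12 : CompCompatible B B' S12) (c23 : CompCompatible B' B'' S23)
    (p : P) (b : FP B' B'') (h : B.R.ε p = S23.L.ρ (Quot.mk _ b))
    (h' : B.R.ε p = B'.L.ρ b.1.1) :
    bwd c12 c23 ⟨(p, Quot.mk _ b), h⟩ = bwdAux c12 p b h' :=
  bwdAux_rel c12 (crep_rel B' B'') p _ _

theorem bwd_sound (c12 : CompCompatible B B' S12)
    (c23 : CompCompatible B' B'' S23) (x y : FP B S23)
    (hxy : BibCompRel B S23 x y) : bwd c12 c23 x = bwd c12 c23 y := by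
  obtain ⟨γ, hγ, e1, e2⟩ := hxy
  have hb : (Quot.mk _ (crep B' B'' x.1.2) : CompCarrier B' B'') = x.1.2 :=
    crep_spec B' B'' x.1.2
  set b := crep B' B'' x.1.2 with hbdef
  have hxb : B.R.ε x.1.1 = B'.L.ρ b.1.1 :=
    x.2.trans ((congrArg S23.L.ρ hb.symm).trans (c23.1 b))
  have hsγ : ΓG.s (ΓG.inv γ) = B'.L.ρ b.1.1 :=
    (ΓG.inv_comp₂ γ).trans (hγ.symm.trans hxb)
  have hey : y.1.2 = Quot.mk _ (fpLeftAct B' B'' (ΓG.inv γ) b hsγ) := by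
    refine e2.trans ?_
    refine (S23.L.act_congr (x := x.1.2) (y := Quot.mk _ b) rfl hb.symm
      ((ΓG.inv_comp₂ γ).trans (hγ.symm.trans x.2))
      (hsγ.trans (c23.1 b).symm)).trans ?_
    exact c23.2.2.2 b (ΓG.inv γ) _ hsγ
  have heyb : B.R.ε y.1.1 = B'.L.ρ (fpLeftAct B' B'' (ΓG.inv γ) b hsγ).1.1 :=
    (congrArg B.R.ε e1).trans ((B.R.ε_act x.1.1 γ hγ).trans
      ((ΓG.inv_comp₁ γ).trans (B'.L.ρ_act (ΓG.inv γ) b.1.1 hsγ).symm))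
  have inner : (Quot.mk (BibCompRel B B') ⟨(x.1.1, b.1.1), hxb⟩ :
      CompCarrier B B') =
      Quot.mk _ ⟨(y.1.1, (fpLeftAct B' B'' (ΓG.inv γ) b hsγ).1.1), heyb⟩ :=
    Quot.sound ⟨γ, hγ, e1, rfl⟩
  have main : bwdAux c12 x.1.1 b hxb =
      bwdAux c12 y.1.1 (fpLeftAct B' B'' (ΓG.inv γ) b hsγ) heyb :=
    congrArg (Quot.mk _) (Subtype.ext (Prod.ext_iff.mpr ⟨inner, rfl⟩))
  have relY : BibCompRel B' B'' (fpLeftAct B' B'' (ΓG.inv γ) b hsγ)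
      (crep B' B'' y.1.2) :=
    compRel_of_eq B' B'' (hey.symm.trans (crep_spec B' B'' y.1.2).symm)
  exact main.trans (bwdAux_rel c12 relY y.1.1 _ _)

end Assoc
section AssocEquiv

variable {H H0 G G0 L L0 K K0 : Type*} {ΓH : Gpd H H0} {ΓG : Gpd G G0}
  {ΓL : Gpd L L0} {ΓK : Gpd K K0} {P P' P'' : Type*}
  {B : Bibundle ΓH ΓG P} {B' : Bibundle ΓG ΓL P'} {B'' : Bibundle ΓL ΓK P''}
  {S12 : Bibundle ΓH ΓL (CompCarrier B B')}
  {S23 : Bibundle ΓG ΓK (CompCarrier B' B'')}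

noncomputable def assocEquiv (c12 : CompCompatible B B' S12)
    (c23 : CompCompatible B' B'' S23) :
    CompCarrier S12 B'' ≃ CompCarrier B S23 where
  toFun := Quot.lift (fwd c12 c23) (fwd_sound c12 c23)
  invFun := Quot.lift (bwd c12 c23) (bwd_sound c12 c23)
  left_inv := by
    intro q
    induction q using Quot.ind with | _ x =>
    have ha : (Quot.mk _ (crep B B' x.1.1) : CompCarrier B B') = x.1.1 :=
      crep_spec B B' x.1.1
    set a := crep B B' x.1.1 with hadef
    have hA : B'.R.ε a.1.2 = B''.L.ρ x.1.2 :=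
      (c12.2.1 a).symm.trans ((congrArg S12.R.ε ha).trans x.2)
    have step1 : Quot.lift (bwd c12 c23) (bwd_sound c12 c23)
        (Quot.lift (fwd c12 c23) (fwd_sound c12 c23) (Quot.mk _ x)) =
        bwdAux c12 a.1.1 ⟨(a.1.2, x.1.2), hA⟩ a.2 :=
      bwd_mk c12 c23 a.1.1 ⟨(a.1.2, x.1.2), hA⟩
        (a.2.trans (c23.1 ⟨(a.1.2, x.1.2), hA⟩).symm) a.2
    refine step1.trans ?_
    exact congrArg (Quot.mk _) (Subtype.ext (Prod.ext_iff.mpr ⟨ha, rfl⟩))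
  right_inv := by
    intro q
    induction q using Quot.ind with | _ x =>
    have hb : (Quot.mk _ (crep B' B'' x.1.2) : CompCarrier B' B'') = x.1.2 :=
      crep_spec B' B'' x.1.2
    set b := crep B' B'' x.1.2 with hbdef
    have hxb : B.R.ε x.1.1 = B'.L.ρ b.1.1 :=
      x.2.trans ((congrArg S23.L.ρ hb.symm).trans (c23.1 b))
    have step1 : Quot.lift (fwd c12 c23) (fwd_sound c12 c23)
        (Quot.lift (bwd c12 c23) (bwd_sound c12 c23) (Quot.mk _ x)) =
        fwdAux c23 ⟨(x.1.1, b.1.1), hxb⟩ b.1.2 b.2 :=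
      fwd_mk c12 c23 ⟨(x.1.1, b.1.1), hxb⟩ b.1.2
        ((c12.2.1 ⟨(x.1.1, b.1.1), hxb⟩).trans b.2) b.2
    refine step1.trans ?_
    exact congrArg (Quot.mk _) (Subtype.ext (Prod.ext_iff.mpr ⟨rfl, hb⟩))

end AssocEquiv
/-- Composition of generalized morphisms: the quotient `P ×_G P'` carries a right
principal `L`-bundle structure from `H` to `L`, and composition is associative up
to isomorphism of the underlying principal bibundles. -/
theorem comp_bibundle_principal_and_assoc
    {H H0 G G0 L L0 K K0 : Type*}
    (ΓH : Gpd H H0) (ΓG : Gpd G G0) (ΓL : Gpd L L0) (ΓK : Gpd K K0)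
    {P P' P'' : Type*}
    (B : Bibundle ΓH ΓG P) (B' : Bibundle ΓG ΓL P') (B'' : Bibundle ΓL ΓK P'')
    (hB : B.IsPrincipal) (hB' : B'.IsPrincipal) (hB'' : B''.IsPrincipal) :
    (∃ S : Bibundle ΓH ΓL (CompCarrier B B'),
        S.IsPrincipal ∧ CompCompatible B B' S) ∧
    (∀ (S12 : Bibundle ΓH ΓL (CompCarrier B B'))
        (S23 : Bibundle ΓG ΓK (CompCarrier B' B'')),
        S12.IsPrincipal → S23.IsPrincipal →
        CompCompatible B B' S12 → CompCompatible B' B'' S23 →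
        ∃ e : CompCarrier S12 B'' ≃ CompCarrier B S23,
          ∀ (p : P) (p' : P') (p'' : P'')
            (h₁ : B.R.ε p = B'.L.ρ p')
            (h₂ : S12.R.ε (Quot.mk _ (⟨(p, p'), h₁⟩ : FP B B')) = B''.L.ρ p'')
            (h₃ : B'.R.ε p' = B''.L.ρ p'')
            (h₄ : B.R.ε p = S23.L.ρ (Quot.mk _ (⟨(p', p''), h₃⟩ : FP B' B''))),
            e (Quot.mk _ (⟨(Quot.mk _ (⟨(p, p'), h₁⟩ : FP B B'), p''), h₂⟩ :
                FP S12 B'')) =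
              Quot.mk _ (⟨(p, Quot.mk _ (⟨(p', p''), h₃⟩ : FP B' B'')), h₄⟩ :
                FP B S23)) := by
  constructor
  · exact ⟨compS B B', compS_principal B B' hB hB', compS_compatible B B'⟩
  · intro S12 S23 _ _ c12 c23
    refine ⟨assocEquiv c12 c23, ?_⟩
    intro p p' p'' h₁ h₂ h₃ h₄
    exact fwd_mk c12 c23 ⟨(p, p'), h₁⟩ p'' h₂ h₃
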